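/- arXiv:0708.2202 — 2 statements merged into one kernel-verified Lean document; each statement's English description precedes it below -/
import Mathlib

section
/- Right invariance of the dual integral ψ̂ defined by ψ̂(φ(·a)) = ε(a): if a, a' ∈ A and c₁, …, cₙ, d₁, …, dₙ ∈ A satisfy Σ φ(x·y₍₁₎·a)·φ(y₍₂₎·a') = Σᵢ φ(x·cᵢ)·φ(y·dᵢ) for all x, y ∈ A, then Σᵢ ε(cᵢ)·φ(y·dᵢ) = ε(a)·φ(y·a') for all y ∈ A. (This expresses (ψ̂ ⊗ id)(Δ̂(b)(1 ⊗ b')) = ψ̂(b)·b' for b = φ(·a), b' = φ(·a') in the dual = {φ(·a) : a ∈ A}.) -/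
open TensorProduct HopfAlgebra

/-- Right invariance of the dual integral `ψ̂(φ(·a)) = ε(a)`:
`(ψ̂ ⊗ id)(Δ̂(b)(1 ⊗ b')) = ψ̂(b) b'` for `b = φ(·a)`, `b' = φ(·a')`. -/
theorem dual_integral_right_invariance
    {A : Type*} [Ring A] [HopfAlgebra ℂ A]
    (hS : Function.Bijective (antipode (R := ℂ) (A := A)))
    (φ : A →ₗ[ℂ] ℂ) (hφ0 : φ ≠ 0)
    (hφL : ∀ a : A,
      (TensorProduct.rid ℂ A) (LinearMap.lTensor A φ (Coalgebra.comul a)) = φ a • (1 : A))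
    (hφf1 : ∀ a : A, (∀ b : A, φ (a * b) = 0) → a = 0)
    (hφf2 : ∀ a : A, (∀ b : A, φ (b * a) = 0) → a = 0)
    (a a' : A) (n : ℕ) (c d : Fin n → A)
    (h : ∀ x y : A,
      (TensorProduct.lid ℂ ℂ)
          (TensorProduct.map (φ ∘ₗ LinearMap.mulRight ℂ a ∘ₗ LinearMap.mulLeft ℂ x)
            (φ ∘ₗ LinearMap.mulRight ℂ a') (Coalgebra.comul (R := ℂ) y)) =
        ∑ i, φ (x * c i) * φ (y * d i)) :
    ∀ y : A,
      ∑ i, Coalgebra.counit (R := ℂ) (c i) * φ (y * d i) =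
        Coalgebra.counit (R := ℂ) a * φ (y * a') := by
  intro y
  classical
  set f : A →ₗ[ℂ] ℂ := φ ∘ₗ LinearMap.mulRight ℂ a' with hf
  -- bilinear map B t₁ t₂ = f t₂ • (t₁ * a)
  set B : A →ₗ[ℂ] A →ₗ[ℂ] A := LinearMap.mk₂ ℂ (fun t₁ t₂ => f t₂ • (t₁ * a))
    (fun m m' t => by rw [add_mul, smul_add])
    (fun r m t => by rw [smul_mul_assoc, smul_comm])
    (fun m t t' => by rw [map_add, add_smul])
    (fun r m t => by rw [map_smul, smul_assoc]) with hB
  set T : A ⊗[ℂ] A →ₗ[ℂ] A := TensorProduct.lift B with hT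
  have key : ∀ (x : A) (t : A ⊗[ℂ] A), φ (x * T t) =
      (TensorProduct.lid ℂ ℂ)
        (TensorProduct.map (φ ∘ₗ LinearMap.mulRight ℂ a ∘ₗ LinearMap.mulLeft ℂ x) f t) := by
    intro x t
    induction t using TensorProduct.induction_on with
    | zero => simp
    | tmul t₁ t₂ =>
        simp [hT, hB, mul_smul_comm, mul_assoc, mul_comm]
    | add s t hs ht =>
        simp only [map_add, mul_add] at *
        rw [hs, ht]
  -- identify T (comul y) with u = Σ φ(y * dᵢ) • cᵢ
  set u : A := ∑ i, φ (y * d i) • c i with hu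
  have hTu : T (Coalgebra.comul (R := ℂ) y) = u := by
    have hz : ∀ x : A, φ (x * (T (Coalgebra.comul (R := ℂ) y) - u)) = 0 := by
      intro x
      rw [mul_sub, map_sub, key x, h x y, sub_eq_zero, hu]
      rw [Finset.mul_sum, map_sum]
      refine Finset.sum_congr rfl fun i _ => ?_
      rw [mul_smul_comm, map_smul, smul_eq_mul, mul_comm]
    exact sub_eq_zero.mp (hφf2 _ hz)
  -- compute the counit of T t
  have hct : ∀ t : A ⊗[ℂ] A, Coalgebra.counit (R := ℂ) (T t) =
      Coalgebra.counit (R := ℂ) a *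
        (TensorProduct.lid ℂ ℂ)
          (LinearMap.lTensor ℂ f ((Coalgebra.counit (R := ℂ)).rTensor A t)) := by
    intro t
    induction t using TensorProduct.induction_on with
    | zero => simp
    | tmul t₁ t₂ =>
        simp only [hT, hB, TensorProduct.lift.tmul, LinearMap.mk₂_apply, map_smul,
          LinearMap.rTensor_tmul, LinearMap.lTensor_tmul, TensorProduct.lid_tmul,
          Bialgebra.counit_mul, smul_eq_mul]
        ring
    | add s t hs ht =>
        simp only [map_add, mul_add] at *
        rw [hs, ht]
  have hfin : Coalgebra.counit (R := ℂ) (T (Coalgebra.comul (R := ℂ) y)) =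
      Coalgebra.counit (R := ℂ) a * φ (y * a') := by
    rw [hct, Coalgebra.rTensor_counit_comul]
    simp [hf]
  rw [hTu, hu] at hfin
  rw [← hfin, map_sum]
  refine Finset.sum_congr rfl fun i _ => ?_
  rw [map_smul, smul_eq_mul, mul_comm]
end

section
/- If the left integral does not vanish at the identity, then left and right integrals coincide and the modular element is trivial: if φ(1) = 1 then (φ ⊗ id)(Δ(a)) = φ(a)·1 for all a ∈ A (so φ is also a right integral) and φ(S(a)) = φ(a) for all a ∈ A. -/
open TensorProduct HopfAlgebra

namespace HopfLeftIntegralAux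

open Coalgebra LinearMap

variable {R : Type*} [CommSemiring R] {A : Type*} [Semiring A] [HopfAlgebra R A]
variable {B : Type*} [Semiring B] [Algebra R B]

noncomputable def conv (f g : A →ₗ[R] B) : A →ₗ[R] B :=
  LinearMap.mul' R B ∘ₗ TensorProduct.map f g ∘ₗ comul

noncomputable def convOne : A →ₗ[R] B := Algebra.linearMap R B ∘ₗ counit

lemma conv_apply (f g : A →ₗ[R] B) (a : A) :
    conv f g a = LinearMap.mul' R B (TensorProduct.map f g (comul a)) := rfl

lemma convOne_conv (f : A →ₗ[R] B) : conv convOne f = f := by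
  unfold conv convOne
  rw [← map_comp_rTensor, comp_assoc, Coalgebra.rTensor_counit_comp_comul]
  ext a
  simp [Algebra.smul_def]

lemma conv_convOne (f : A →ₗ[R] B) : conv f convOne = f := by
  unfold conv convOne
  rw [← map_comp_lTensor, comp_assoc, Coalgebra.lTensor_counit_comp_comul]
  ext a
  simp [Algebra.smul_def, Algebra.commutes]

lemma map_conv_left (f g h : A →ₗ[R] B) :
    TensorProduct.map (conv f g) h =
      ((LinearMap.mul' R B).rTensor B ∘ₗ TensorProduct.map (TensorProduct.map f g) h) ∘ₗ
        (comul (R := R) (A := A)).rTensor A :=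
  TensorProduct.ext' fun x y => by simp [conv_apply]

lemma map_conv_right (f g h : A →ₗ[R] B) :
    TensorProduct.map f (conv g h) =
      ((LinearMap.mul' R B).lTensor B ∘ₗ TensorProduct.map f (TensorProduct.map g h)) ∘ₗ
        (comul (R := R) (A := A)).lTensor A :=
  TensorProduct.ext' fun x y => by simp [conv_apply]

lemma conv_assoc (f g h : A →ₗ[R] B) : conv (conv f g) h = conv f (conv g h) := by
  have key : ((LinearMap.mul' R B ∘ₗ (LinearMap.mul' R B).lTensor B) ∘ₗ
        TensorProduct.map f (TensorProduct.map g h)) ∘ₗ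
        (TensorProduct.assoc R A A A).toLinearMap =
      (LinearMap.mul' R B ∘ₗ (LinearMap.mul' R B).rTensor B) ∘ₗ
        TensorProduct.map (TensorProduct.map f g) h := by
    apply TensorProduct.ext_threefold
    intro x y z
    simp [mul_assoc]
  have ldef : conv (conv f g) h = LinearMap.mul' R B ∘ₗ TensorProduct.map (conv f g) h ∘ₗ comul := rfl
  have rdef : conv f (conv g h) = LinearMap.mul' R B ∘ₗ TensorProduct.map f (conv g h) ∘ₗ comul := rfl
  rw [ldef, rdef, map_conv_left, map_conv_right]
  simp only [comp_assoc]
  rw [← Coalgebra.coassoc]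
  simp only [← comp_assoc]
  rw [key]

lemma conv_antipode_id : conv (antipode (R := R) (A := A)) LinearMap.id = convOne := by
  unfold conv convOne
  rw [show TensorProduct.map (antipode (R := R) (A := A)) LinearMap.id
      = (antipode (R := R) (A := A)).rTensor A by simp [rTensor]]
  exact mul_antipode_rTensor_comul

lemma conv_id_antipode : conv LinearMap.id (antipode (R := R) (A := A)) = convOne := by
  unfold conv convOne
  rw [show TensorProduct.map LinearMap.id (antipode (R := R) (A := A))
      = (antipode (R := R) (A := A)).lTensor A by simp [lTensor]]
  exact mul_antipode_lTensor_comul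


noncomputable def tau : A ⊗[R] A →ₗ[R] A ⊗[R] A := (TensorProduct.comm R A A).toLinearMap

@[simp] lemma tau_tmul (x y : A) : tau (R := R) (x ⊗ₜ y) = y ⊗ₜ x := rfl

lemma mulAA_map_comul_comul :
    LinearMap.mul' R (A ⊗[R] A) ∘ₗ
        TensorProduct.map (comul : A →ₗ[R] A ⊗[R] A) (comul : A →ₗ[R] A ⊗[R] A) =
      (comul : A →ₗ[R] A ⊗[R] A) ∘ₗ LinearMap.mul' R A :=
  TensorProduct.ext' fun x y => by simp [LinearMap.mul'_apply]

lemma claim1 : LinearMap.mul' R (A ⊗[R] A) ∘ₗ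
      TensorProduct.map (comul : A →ₗ[R] A ⊗[R] A)
        ((comul : A →ₗ[R] A ⊗[R] A) ∘ₗ antipode (R := R)) ∘ₗ comul =
    Algebra.linearMap R (A ⊗[R] A) ∘ₗ counit := by
  rw [← map_comp_lTensor]
  simp only [← comp_assoc]
  rw [mulAA_map_comul_comul]
  simp only [comp_assoc]
  rw [mul_antipode_lTensor_comul]
  ext a
  simp [Algebra.algebraMap_eq_smul_one]

lemma inner_lemma :
    ((LinearMap.mul' R A ∘ₗ (antipode (R := R) (A := A)).rTensor A).rTensor A) ∘ₗ
      ((TensorProduct.assoc R A A A).symm.toLinearMap ∘ₗ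
        ((comul : A →ₗ[R] A ⊗[R] A).lTensor A ∘ₗ comul)) =
    (TensorProduct.mk R A A) 1 := by
  rw [Coalgebra.coassoc_symm, ← comp_assoc, ← rTensor_comp, comp_assoc,
    mul_antipode_rTensor_comul, rTensor_comp, comp_assoc,
    Coalgebra.rTensor_counit_comp_comul]
  ext a
  simp

lemma natural_assoc_symm :
    (comul : A →ₗ[R] A ⊗[R] A).lTensor (A ⊗[R] A) ∘ₗ
        (TensorProduct.assoc R A A A).symm.toLinearMap =
      (TensorProduct.assoc R A A (A ⊗[R] A)).symm.toLinearMap ∘ₗ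
        ((comul : A →ₗ[R] A ⊗[R] A).lTensor A).lTensor A := by
  simpa [lTensor, TensorProduct.map_id] using
    TensorProduct.map_map_comp_assoc_symm_eq (LinearMap.id (R := R) (M := A))
      (LinearMap.id (R := R) (M := A)) (comul : A →ₗ[R] A ⊗[R] A)

lemma comul_comul_expand :
    TensorProduct.map (comul : A →ₗ[R] A ⊗[R] A) (comul : A →ₗ[R] A ⊗[R] A) ∘ₗ comul =
      (TensorProduct.assoc R A A (A ⊗[R] A)).symm.toLinearMap ∘ₗ
        (((comul : A →ₗ[R] A ⊗[R] A).lTensor A ∘ₗ comul).lTensor A) ∘ₗ comul := by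
  calc TensorProduct.map (comul : A →ₗ[R] A ⊗[R] A) (comul : A →ₗ[R] A ⊗[R] A) ∘ₗ comul
      = (comul : A →ₗ[R] A ⊗[R] A).lTensor (A ⊗[R] A) ∘ₗ
          ((comul : A →ₗ[R] A ⊗[R] A).rTensor A ∘ₗ comul) := by
        rw [← lTensor_comp_rTensor]; simp only [comp_assoc]
    _ = (comul : A →ₗ[R] A ⊗[R] A).lTensor (A ⊗[R] A) ∘ₗ
          ((TensorProduct.assoc R A A A).symm.toLinearMap ∘ₗ
            (comul : A →ₗ[R] A ⊗[R] A).lTensor A ∘ₗ comul) := by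
        rw [Coalgebra.coassoc_symm]
    _ = ((TensorProduct.assoc R A A (A ⊗[R] A)).symm.toLinearMap ∘ₗ
          ((comul : A →ₗ[R] A ⊗[R] A).lTensor A).lTensor A) ∘ₗ
          ((comul : A →ₗ[R] A ⊗[R] A).lTensor A ∘ₗ comul) := by
        rw [← comp_assoc, natural_assoc_symm]
    _ = (TensorProduct.assoc R A A (A ⊗[R] A)).symm.toLinearMap ∘ₗ
          (((comul : A →ₗ[R] A ⊗[R] A).lTensor A ∘ₗ comul).lTensor A) ∘ₗ comul := by
        rw [lTensor_comp]; simp only [comp_assoc]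

set_option synthInstance.maxHeartbeats 400000 in
lemma Xi_pure (x : A) (t : A ⊗[R] (A ⊗[R] A)) :
    (LinearMap.mul' R (A ⊗[R] A))
      (TensorProduct.map
        (TensorProduct.map (antipode (R := R)) (antipode (R := R)) ∘ₗ tau) LinearMap.id
        ((TensorProduct.assoc R A A (A ⊗[R] A)).symm (x ⊗ₜ t))) =
    (LinearMap.mulLeft R (antipode (R := R) x)).lTensor A
      (((LinearMap.mul' R A ∘ₗ (antipode (R := R) (A := A)).rTensor A).rTensor A)
        ((TensorProduct.assoc R A A A).symm t)) := by
  induction t using TensorProduct.induction_on with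
  | zero => simp
  | tmul y u =>
    induction u using TensorProduct.induction_on with
    | zero => simp [TensorProduct.tmul_zero]
    | tmul z w =>
      simp [LinearMap.mul'_apply, Algebra.TensorProduct.tmul_mul_tmul, mul_assoc]
    | add u₁ u₂ h₁ h₂ =>
      simp only [TensorProduct.tmul_add, map_add] at *
      rw [h₁, h₂]
  | add t₁ t₂ h₁ h₂ =>
    simp only [TensorProduct.tmul_add, map_add] at *
    rw [h₁, h₂]


lemma inner2 (y : A) :
    ((LinearMap.mul' R A ∘ₗ (antipode (R := R) (A := A)).rTensor A).rTensor A)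
      ((TensorProduct.assoc R A A A).symm
        (((comul : A →ₗ[R] A ⊗[R] A).lTensor A) (comul y))) = 1 ⊗ₜ[R] y := by
  simpa using LinearMap.congr_fun (inner_lemma (R := R) (A := A)) y

lemma claim2 : LinearMap.mul' R (A ⊗[R] A) ∘ₗ
      TensorProduct.map
        (TensorProduct.map (antipode (R := R)) (antipode (R := R)) ∘ₗ tau ∘ₗ comul)
        (comul : A →ₗ[R] A ⊗[R] A) ∘ₗ comul =
    Algebra.linearMap R (A ⊗[R] A) ∘ₗ counit := by
  have e1 : TensorProduct.map
        (TensorProduct.map (antipode (R := R) (A := A)) (antipode (R := R)) ∘ₗ tau ∘ₗ comul)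
        (comul : A →ₗ[R] A ⊗[R] A) =
      TensorProduct.map
        (TensorProduct.map (antipode (R := R)) (antipode (R := R)) ∘ₗ tau) LinearMap.id ∘ₗ
        TensorProduct.map (comul : A →ₗ[R] A ⊗[R] A) comul :=
    TensorProduct.ext' fun x y => by simp
  ext a
  rw [comp_apply, comp_apply, e1, comp_apply]
  have expand := LinearMap.congr_fun (comul_comul_expand (R := R) (A := A)) a
  simp only [comp_apply] at expand
  rw [expand]
  have r := Coalgebra.Repr.arbitrary R a
  have hsum : (comul a : A ⊗[R] A) = ∑ i ∈ r.index, r.left i ⊗ₜ[R] r.right i := r.eq.symm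
  rw [hsum]
  simp only [map_sum, lTensor_tmul, LinearEquiv.coe_coe]
  have hterm : ∀ i ∈ r.index,
      (LinearMap.mul' R (A ⊗[R] A))
        (TensorProduct.map
          (TensorProduct.map (antipode (R := R)) (antipode (R := R)) ∘ₗ tau) LinearMap.id
          ((TensorProduct.assoc R A A (A ⊗[R] A)).symm
            (r.left i ⊗ₜ (((comul : A →ₗ[R] A ⊗[R] A).lTensor A ∘ₗ comul) (r.right i))))) =
      1 ⊗ₜ[R] (antipode (R := R) (r.left i) * r.right i) := by
    intro i _
    rw [Xi_pure]
    rw [comp_apply, inner2]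
    simp
  rw [Finset.sum_congr rfl hterm, ← TensorProduct.tmul_sum,
    HopfAlgebra.sum_antipode_mul_eq_smul r]
  simp [Algebra.algebraMap_eq_smul_one, Algebra.TensorProduct.one_def]


lemma comul_antipode : (comul : A →ₗ[R] A ⊗[R] A) ∘ₗ antipode (R := R) =
    TensorProduct.map (antipode (R := R)) (antipode (R := R)) ∘ₗ tau ∘ₗ comul := by
  have h1 : conv (comul : A →ₗ[R] A ⊗[R] A) ((comul : A →ₗ[R] A ⊗[R] A) ∘ₗ antipode (R := R))
      = convOne := claim1
  have h2 : conv (TensorProduct.map (antipode (R := R) (A := A)) (antipode (R := R)) ∘ₗ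
      tau ∘ₗ comul) (comul : A →ₗ[R] A ⊗[R] A) = convOne := claim2
  calc (comul : A →ₗ[R] A ⊗[R] A) ∘ₗ antipode (R := R)
      = conv convOne ((comul : A →ₗ[R] A ⊗[R] A) ∘ₗ antipode (R := R)) :=
        (convOne_conv _).symm
    _ = conv (conv (TensorProduct.map (antipode (R := R) (A := A)) (antipode (R := R)) ∘ₗ
          tau ∘ₗ comul) (comul : A →ₗ[R] A ⊗[R] A))
          ((comul : A →ₗ[R] A ⊗[R] A) ∘ₗ antipode (R := R)) := by rw [h2]
    _ = conv (TensorProduct.map (antipode (R := R) (A := A)) (antipode (R := R)) ∘ₗ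
          tau ∘ₗ comul)
          (conv (comul : A →ₗ[R] A ⊗[R] A)
            ((comul : A →ₗ[R] A ⊗[R] A) ∘ₗ antipode (R := R))) := conv_assoc _ _ _
    _ = conv (TensorProduct.map (antipode (R := R) (A := A)) (antipode (R := R)) ∘ₗ
          tau ∘ₗ comul) convOne := by rw [h1]
    _ = _ := conv_convOne _

lemma antipode_one' : antipode (R := R) (A := A) 1 = 1 := by
  have h := mul_antipode_rTensor_comul_apply (R := R) (A := A) (a := 1)
  rw [Bialgebra.comul_one, Algebra.TensorProduct.one_def] at h
  simpa using h


end HopfLeftIntegralAux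

open HopfLeftIntegralAux LinearMap in
/-- If the left integral does not vanish at the identity (`φ(1) = 1`), then `φ` is also a
right integral and `φ ∘ S = φ` (the modular element is trivial). -/
theorem left_integral_unital_is_right_integral
    {A : Type*} [Ring A] [HopfAlgebra ℂ A]
    (hS : Function.Bijective (antipode (R := ℂ) (A := A)))
    (φ : A →ₗ[ℂ] ℂ) (hφ0 : φ ≠ 0)
    (hφL : ∀ a : A,
      (TensorProduct.rid ℂ A) (LinearMap.lTensor A φ (Coalgebra.comul a)) = φ a • (1 : A))
    (hφ1 : φ 1 = 1) :
    (∀ a : A,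
        (TensorProduct.lid ℂ A) (LinearMap.rTensor A φ (Coalgebra.comul a)) = φ a • (1 : A)) ∧
      ∀ a : A, φ (antipode (R := ℂ) a) = φ a := by
  have hanti : ∀ a : A, Coalgebra.comul (R := ℂ) (antipode (R := ℂ) a) =
      TensorProduct.map (antipode (R := ℂ)) (antipode (R := ℂ)) (tau (Coalgebra.comul a)) :=
    fun a => by
      simpa [comp_apply] using LinearMap.congr_fun (comul_antipode (R := ℂ) (A := A)) a
  have hS1 : antipode (R := ℂ) (A := A) 1 = 1 := antipode_one'
  set ψ : A →ₗ[ℂ] ℂ := φ ∘ₗ antipode (R := ℂ) with hψ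
  have hψa : ∀ a : A, ψ a = φ (antipode (R := ℂ) a) := fun a => rfl
  have aux1 : ∀ t : A ⊗[ℂ] A,
      (TensorProduct.rid ℂ A) (LinearMap.lTensor A φ
        (TensorProduct.map (antipode (R := ℂ)) (antipode (R := ℂ)) (tau t))) =
      antipode (R := ℂ) ((TensorProduct.lid ℂ A) (LinearMap.rTensor A ψ t)) := by
    intro t
    induction t using TensorProduct.induction_on with
    | zero => simp
    | tmul x y => simp [hψa]
    | add t₁ t₂ h₁ h₂ => simp only [map_add, h₁, h₂]
  have main1 : ∀ a : A,
      (TensorProduct.lid ℂ A) (LinearMap.rTensor A ψ (Coalgebra.comul a)) = ψ a • 1 := by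
    intro a
    have h := hφL (antipode (R := ℂ) a)
    rw [hanti a, aux1] at h
    apply hS.injective
    rw [h, map_smul, hS1, hψa]
  have aux2 : ∀ t : A ⊗[ℂ] A,
      φ ((TensorProduct.lid ℂ A) (LinearMap.rTensor A ψ t)) =
      ψ ((TensorProduct.rid ℂ A) (LinearMap.lTensor A φ t)) := by
    intro t
    induction t using TensorProduct.induction_on with
    | zero => simp
    | tmul x y => simp [mul_comm]
    | add t₁ t₂ h₁ h₂ => simp only [map_add, h₁, h₂]
  have hψ1 : ψ (1 : A) = 1 := by rw [hψa, hS1, hφ1]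
  have main2 : ∀ a : A, ψ a = φ a := by
    intro a
    have h1 := congr_arg φ (main1 a)
    have h2 := congr_arg ψ (hφL a)
    rw [aux2] at h1
    rw [map_smul, hφ1, smul_eq_mul, mul_one] at h1
    rw [map_smul, hψ1, smul_eq_mul, mul_one] at h2
    rw [← h1, h2]
  have hψφ : ψ = φ := LinearMap.ext main2
  constructor
  · intro a
    have := main1 a
    rw [hψφ] at this
    exact this
  · intro a
    rw [← hψa a, main2 a]
end
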